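/- The logistic Bellman error G : ℝ^m → ℝ, defined by G(θ) = (1/η)·log(Σ_{x,a} p₀(x,a)·e^{η·Δ_θ(x,a)}) + (1−γ)·Σ_x ν₀(x)·V_θ(x), is a convex function of θ. -/

import Mathlib

open Finset in
private lemma aux_lin_convex {m : ℕ} (v : Fin m → ℝ) :
    ConvexOn ℝ Set.univ (fun θ : Fin m → ℝ => ∑ i, θ i * v i) := by
  refine ⟨convex_univ, ?_⟩
  intro x _ y _ a b _ _ _
  simp only [Pi.add_apply, Pi.smul_apply, smul_eq_mul, add_mul, mul_assoc,
    Finset.sum_add_distrib, Finset.mul_sum]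
  exact le_of_eq rfl

open Finset in
private lemma aux_sum_convex {E ι : Type*} [AddCommGroup E] [Module ℝ E]
    (s : Finset ι) (f : ι → E → ℝ) (h : ∀ i ∈ s, ConvexOn ℝ Set.univ (f i)) :
    ConvexOn ℝ Set.univ (fun θ => ∑ i ∈ s, f i θ) := by
  classical
  induction s using Finset.induction with
  | empty => simpa using convexOn_const (0 : ℝ) convex_univ
  | @insert i t hx ih =>
    simp only [Finset.sum_insert hx]
    exact (h i (Finset.mem_insert_self i t)).add
      (ih fun j hj => h j (Finset.mem_insert_of_mem hj))

/-- Log-sum-exp of convex functions with positive weights is convex. -/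
private lemma aux_lse_convex {E ι : Type*} [AddCommGroup E] [Module ℝ E]
    (s : Finset ι) (hs : s.Nonempty) (w : ι → ℝ) (hw : ∀ i, 0 < w i)
    (f : ι → E → ℝ) (hf : ∀ i, ConvexOn ℝ Set.univ (f i)) (c : ℝ) (hc : 0 < c) :
    ConvexOn ℝ Set.univ (fun θ => (1 / c) * Real.log (∑ i ∈ s, w i * Real.exp (c * f i θ))) := by
  refine ⟨convex_univ, ?_⟩
  intro x _ y _ a b ha hb hab
  simp only [smul_eq_mul]
  rcases ha.eq_or_lt with h0 | ha'
  · have hb1 : b = 1 := by linarith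
    subst hb1; rw [← h0]; simp
  rcases hb.eq_or_lt with h0 | hb'
  · have ha1 : a = 1 := by linarith
    subst ha1; rw [← h0]; simp
  -- now 0 < a, 0 < b, a + b = 1
  have ha1 : a < 1 := by linarith
  set S₁ : ℝ := ∑ i ∈ s, w i * Real.exp (c * f i x) with hS₁
  set S₂ : ℝ := ∑ i ∈ s, w i * Real.exp (c * f i y) with hS₂
  have hS₁pos : 0 < S₁ :=
    Finset.sum_pos (fun i _ => mul_pos (hw i) (Real.exp_pos _)) hs
  have hS₂pos : 0 < S₂ :=
    Finset.sum_pos (fun i _ => mul_pos (hw i) (Real.exp_pos _)) hs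
  have key : ∑ i ∈ s, w i * Real.exp (c * f i (a • x + b • y)) ≤ S₁ ^ a * S₂ ^ b := by
    have step1 : ∑ i ∈ s, w i * Real.exp (c * f i (a • x + b • y)) ≤
        ∑ i ∈ s, (w i * Real.exp (c * f i x)) ^ a * (w i * Real.exp (c * f i y)) ^ b := by
      refine Finset.sum_le_sum fun i _ => ?_
      have hconv : f i (a • x + b • y) ≤ a * f i x + b * f i y :=
        (hf i).2 (Set.mem_univ x) (Set.mem_univ y) ha hb hab
      have h1 : w i * Real.exp (c * f i (a • x + b • y)) ≤
          w i * Real.exp (a * (c * f i x) + b * (c * f i y)) := by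
        refine mul_le_mul_of_nonneg_left (Real.exp_le_exp.mpr ?_) (hw i).le
        nlinarith [hconv]
      refine h1.trans (le_of_eq ?_)
      have e : (w i * Real.exp (c * f i x)) ^ a * (w i * Real.exp (c * f i y)) ^ b
          = w i * Real.exp (a * (c * f i x) + b * (c * f i y)) := by
        rw [Real.mul_rpow (hw i).le (Real.exp_pos _).le,
          Real.mul_rpow (hw i).le (Real.exp_pos _).le,
          ← Real.exp_mul, ← Real.exp_mul]
        calc w i ^ a * Real.exp (c * f i x * a) * (w i ^ b * Real.exp (c * f i y * b))
            = w i ^ (a + b) * Real.exp (c * f i x * a + c * f i y * b) := by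
              rw [Real.rpow_add (hw i), Real.exp_add]; ring
          _ = w i * Real.exp (a * (c * f i x) + b * (c * f i y)) := by
              rw [hab, Real.rpow_one, mul_comm (c * f i x) a, mul_comm (c * f i y) b]
      exact e.symm
    refine step1.trans ?_
    -- Hölder with p = 1/a, q = 1/b
    have hpq : Real.HolderConjugate a⁻¹ b⁻¹ := by
      rw [Real.holderConjugate_iff]
      constructor
      · exact (one_lt_inv₀ ha').mpr ha1
      · rw [inv_inv, inv_inv]; exact hab
    have hH := Real.inner_le_Lp_mul_Lq_of_nonneg s hpq
      (f := fun i => (w i * Real.exp (c * f i x)) ^ a)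
      (g := fun i => (w i * Real.exp (c * f i y)) ^ b)
      (fun i _ => Real.rpow_nonneg (mul_pos (hw i) (Real.exp_pos _)).le _)
      (fun i _ => Real.rpow_nonneg (mul_pos (hw i) (Real.exp_pos _)).le _)
    have e1 : ∀ i : ι, ((w i * Real.exp (c * f i x)) ^ a) ^ (a⁻¹ : ℝ) =
        w i * Real.exp (c * f i x) := fun i => by
      rw [← Real.rpow_mul (mul_pos (hw i) (Real.exp_pos _)).le,
        mul_inv_cancel₀ ha'.ne', Real.rpow_one]
    have e2 : ∀ i : ι, ((w i * Real.exp (c * f i y)) ^ b) ^ (b⁻¹ : ℝ) =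
        w i * Real.exp (c * f i y) := fun i => by
      rw [← Real.rpow_mul (mul_pos (hw i) (Real.exp_pos _)).le,
        mul_inv_cancel₀ hb'.ne', Real.rpow_one]
    simp only [e1, e2, one_div, inv_inv] at hH
    exact hH
  have hLHSpos : 0 < ∑ i ∈ s, w i * Real.exp (c * f i (a • x + b • y)) :=
    Finset.sum_pos (fun i _ => mul_pos (hw i) (Real.exp_pos _)) hs
  have hlog : Real.log (∑ i ∈ s, w i * Real.exp (c * f i (a • x + b • y))) ≤
      a * Real.log S₁ + b * Real.log S₂ := by
    calc Real.log (∑ i ∈ s, w i * Real.exp (c * f i (a • x + b • y)))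
        ≤ Real.log (S₁ ^ a * S₂ ^ b) := Real.log_le_log hLHSpos key
      _ = a * Real.log S₁ + b * Real.log S₂ := by
          rw [Real.log_mul (Real.rpow_pos_of_pos hS₁pos _).ne'
            (Real.rpow_pos_of_pos hS₂pos _).ne', Real.log_rpow hS₁pos, Real.log_rpow hS₂pos]
  have h1c : (0:ℝ) ≤ 1 / c := by positivity
  calc (1 / c) * Real.log (∑ i ∈ s, w i * Real.exp (c * f i (a • x + b • y)))
      ≤ (1 / c) * (a * Real.log S₁ + b * Real.log S₂) :=
        mul_le_mul_of_nonneg_left hlog h1c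
    _ = a * ((1 / c) * Real.log S₁) + b * ((1 / c) * Real.log S₂) := by ring

set_option maxHeartbeats 1000000 in
/-- The logistic Bellman error
G(θ) = (1/η)·log(Σ_{x,a} p₀(x,a)·e^{η·Δ_θ(x,a)}) + (1−γ)·Σ_x ν₀(x)·V_θ(x)
is a convex function of θ ∈ ℝ^m. -/
theorem stmt10 {X A : Type*} [Fintype X] [Fintype A] [Nonempty X] [Nonempty A]
    {m : ℕ} (P : X → A → X → ℝ) (r : X → A → ℝ) (γ : ℝ) (ν₀ : X → ℝ)
    (φ : X → A → Fin m → ℝ) (α η : ℝ)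
    (p₀ : X → A → ℝ) (π₀ : X → A → ℝ)
    (hP0 : ∀ x a x', 0 ≤ P x a x') (hP1 : ∀ x a, ∑ x', P x a x' = 1)
    (hr : ∀ x a, 0 ≤ r x a ∧ r x a ≤ 1)
    (hγ0 : 0 < γ) (hγ1 : γ < 1)
    (hν₀0 : ∀ x, 0 ≤ ν₀ x) (hν₀1 : ∑ x, ν₀ x = 1)
    (hα : 0 < α) (hη : 0 < η)
    (hp₀pos : ∀ x a, 0 < p₀ x a) (hp₀1 : ∑ x, ∑ a, p₀ x a = 1)
    (hπ₀pos : ∀ x a, 0 < π₀ x a) (hπ₀1 : ∀ x, ∑ a, π₀ x a = 1)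
    (Q : (Fin m → ℝ) → X → A → ℝ)
    (hQ : ∀ θ x a, Q θ x a = ∑ i, θ i * φ x a i)
    (V : (Fin m → ℝ) → X → ℝ)
    (hV : ∀ θ x, V θ x = (1 / α) * Real.log (∑ a, π₀ x a * Real.exp (α * Q θ x a)))
    (Δ : (Fin m → ℝ) → X → A → ℝ)
    (hΔ : ∀ θ x a, Δ θ x a = r x a + γ * (∑ x', P x a x' * V θ x') - Q θ x a)
    (G : (Fin m → ℝ) → ℝ)
    (hG : ∀ θ, G θ = (1 / η) * Real.log (∑ x, ∑ a, p₀ x a * Real.exp (η * Δ θ x a))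
        + (1 - γ) * ∑ x, ν₀ x * V θ x) :
    ConvexOn ℝ Set.univ G := by
  classical
  -- V θ x is convex in θ for each x
  have hVconv : ∀ x : X, ConvexOn ℝ Set.univ (fun θ => V θ x) := by
    intro x
    have : (fun θ : Fin m → ℝ => V θ x) =
        fun θ => (1 / α) * Real.log (∑ a, π₀ x a * Real.exp (α * (∑ i, θ i * φ x a i))) := by
      funext θ; rw [hV]; simp_rw [hQ]
    rw [this]
    apply aux_lse_convex (ι := A) (E := Fin m → ℝ) Finset.univ Finset.univ_nonempty (π₀ x)
      (hπ₀pos x) (fun a θ => ∑ i, θ i * φ x a i) (fun a => aux_lin_convex _) α hα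
  -- Δ θ x a is convex in θ
  have hΔconv : ∀ (x : X) (a : A), ConvexOn ℝ Set.univ (fun θ => Δ θ x a) := by
    intro x a
    have : (fun θ : Fin m → ℝ => Δ θ x a) =
        fun θ => (r x a + γ * (∑ x', P x a x' * V θ x')) + (∑ i, θ i * (-(φ x a i))) := by
      funext θ; rw [hΔ, hQ]
      have : ∑ i, θ i * (-(φ x a i)) = -(∑ i, θ i * φ x a i) := by
        rw [← Finset.sum_neg_distrib]; congr 1; funext i; ring
      rw [this]; ring
    rw [this]
    refine ConvexOn.add ?_ (aux_lin_convex _)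
    refine ConvexOn.add (convexOn_const _ convex_univ) ?_
    have : (fun θ : Fin m → ℝ => γ * (∑ x', P x a x' * V θ x')) =
        fun θ => ∑ x', (γ * P x a x') * V θ x' := by
      funext θ; rw [Finset.mul_sum]; congr 1; funext x'; ring
    rw [this]
    refine aux_sum_convex Finset.univ _ fun x' _ => ?_
    have hc : 0 ≤ γ * P x a x' := mul_nonneg hγ0.le (hP0 x a x')
    simpa [smul_eq_mul] using (hVconv x').smul hc
  -- Put it together
  have hGeq : G = (fun θ => (1 / η) * Real.log
        (∑ p : X × A, p₀ p.1 p.2 * Real.exp (η * Δ θ p.1 p.2))) +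
      fun θ => ∑ x, ((1 - γ) * ν₀ x) * V θ x := by
    funext θ; rw [hG]
    congr 1
    · simp only [← Finset.sum_product', Finset.univ_product_univ]
    · rw [Finset.mul_sum]; congr 1; funext x; ring
  rw [hGeq]
  refine ConvexOn.add ?_ ?_
  · apply aux_lse_convex (ι := X × A) (E := Fin m → ℝ) Finset.univ Finset.univ_nonempty
      (fun p : X × A => p₀ p.1 p.2) (fun p => hp₀pos p.1 p.2) (fun p θ => Δ θ p.1 p.2)
      (fun p => hΔconv p.1 p.2) η hη
  · refine aux_sum_convex Finset.univ _ fun x _ => ?_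
    have hc : 0 ≤ (1 - γ) * ν₀ x := mul_nonneg (by linarith) (hν₀0 x)
    simpa [smul_eq_mul] using (hVconv x).smul hc
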